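/- For every k ≥ 1 there exists a constant C = C(k) such that for every n ≥ 2, the number of simple graphs on the labeled vertex set {1,…,n} having clique-width at most k is at most 2^{C·n·log₂ n} (equivalently, at most n^{C·n}). -/

import Mathlib

/-- The color-controlled join of two vertex-disjoint colored graphs:
disjoint union plus all edges between a vertex of `G₁` colored `i` and a vertex of
`G₂` colored `j` for `(i,j) ∈ S`. -/
def joinGraph {k : ℕ} {α β : Type*} (G₁ : SimpleGraph α) (G₂ : SimpleGraph β)
    (c₁ : α → Fin k) (c₂ : β → Fin k) (S : Set (Fin k × Fin k)) : SimpleGraph (α ⊕ β) where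
  Adj x y :=
    match x, y with
    | Sum.inl a, Sum.inl b => G₁.Adj a b
    | Sum.inr a, Sum.inr b => G₂.Adj a b
    | Sum.inl a, Sum.inr b => (c₁ a, c₂ b) ∈ S
    | Sum.inr b, Sum.inl a => (c₁ a, c₂ b) ∈ S
  symm := by
    constructor
    rintro (a | a) (b | b) h
    · exact G₁.adj_symm h
    · exact h
    · exact h
    · exact G₂.adj_symm h
  loopless := by
    constructor
    rintro (a | a) h
    · exact h.ne rfl
    · exact h.ne rfl

/-- Add all edges between vertices colored `i` and vertices colored `j`. -/
def addColorEdges {k : ℕ} {α : Type*} (G : SimpleGraph α) (c : α → Fin k)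
    (i j : Fin k) : SimpleGraph α where
  Adj u v := G.Adj u v ∨ (u ≠ v ∧ ((c u = i ∧ c v = j) ∨ (c u = j ∧ c v = i)))
  symm := by
    constructor
    intro u v h
    rcases h with h | ⟨hne, hc⟩
    · exact Or.inl h.symm
    · exact Or.inr ⟨hne.symm, hc.symm.imp And.symm And.symm⟩
  loopless := by
    constructor
    intro v h
    rcases h with h | ⟨hne, _⟩
    · exact h.ne rfl
    · exact hne rfl

/-- Clique-width expressions with colors in `Fin k`. -/
inductive CWExpr (k : ℕ) : Type
  | single (c : Fin k) : CWExpr k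
  | union (t₁ t₂ : CWExpr k) : CWExpr k
  | addEdges (i j : Fin k) (hij : i ≠ j) (t : CWExpr k) : CWExpr k
  | recolor (i j : Fin k) (t : CWExpr k) : CWExpr k

namespace CWExpr

variable {k : ℕ}

/-- The vertex set of the colored graph built by a clique-width expression. -/
def V : CWExpr k → Type
  | single _ => Unit
  | union t₁ t₂ => t₁.V ⊕ t₂.V
  | addEdges _ _ _ t => t.V
  | recolor _ _ t => t.V

/-- The coloring of the colored graph built by a clique-width expression. -/
def coloring : (t : CWExpr k) → t.V → Fin k
  | single c => fun _ => c
  | union t₁ t₂ => Sum.elim t₁.coloring t₂.coloring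
  | addEdges _ _ _ t => t.coloring
  | recolor i j t => fun v => if t.coloring v = i then j else t.coloring v

/-- The graph built by a clique-width expression. -/
def graph : (t : CWExpr k) → SimpleGraph t.V
  | single _ => ⊥
  | union t₁ t₂ => joinGraph t₁.graph t₂.graph t₁.coloring t₂.coloring ∅
  | addEdges i j _ t => addColorEdges t.graph t.coloring i j
  | recolor _ _ t => t.graph

end CWExpr

attribute [reducible] CWExpr.V

/-- `G` has clique-width at most `k`: it is the underlying graph of a colored graph
constructible by the clique-width operations with `k` colors. -/
def HasCliqueWidthLE {V : Type*} (G : SimpleGraph V) (k : ℕ) : Prop :=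
  ∃ t : CWExpr k, Nonempty (G ≃g t.graph)

/-- The clique-width of a graph: the least `k` such that `G` is constructible with `k` colors. -/
noncomputable def cliqueWidth {V : Type*} (G : SimpleGraph V) : ℕ :=
  sInf {k | HasCliqueWidthLE G k}


/-- Node decoration data for normal-form trees. -/
abbrev NData (k : ℕ) := Fin k ⊕ (Finset (Fin k × Fin k) × (Fin k → Fin k))

/-- Normal-form clique-width trees. -/
inductive NT (k : ℕ) : Type
  | leaf (c : Fin k) : NT k
  | node (R : Finset (Fin k × Fin k)) (f : Fin k → Fin k) (l r : NT k) : NT k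

namespace NT

variable {k : ℕ}

def V : NT k → Type
  | leaf _ => Unit
  | node _ _ l r => l.V ⊕ r.V

attribute [reducible] NT.V

def size : NT k → ℕ
  | leaf _ => 1
  | node _ _ l r => l.size + r.size

def coloring : (s : NT k) → s.V → Fin k
  | leaf c => fun _ => c
  | node _ f l r => fun v => f (Sum.elim l.coloring r.coloring v)

/-- Add all edges between color pairs in `R` (in either order). -/
def addR {α : Type*} (G : SimpleGraph α) (c : α → Fin k) (R : Finset (Fin k × Fin k)) :
    SimpleGraph α where
  Adj u v := G.Adj u v ∨ (u ≠ v ∧ ((c u, c v) ∈ R ∨ (c v, c u) ∈ R))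
  symm := by
    constructor
    intro u v h
    rcases h with h | ⟨hne, hc⟩
    · exact Or.inl h.symm
    · exact Or.inr ⟨hne.symm, hc.symm⟩
  loopless := by
    constructor
    intro v h
    rcases h with h | ⟨hne, _⟩
    · exact h.ne rfl
    · exact hne rfl

def graph : (s : NT k) → SimpleGraph s.V
  | leaf _ => ⊥
  | node R _ l r =>
      addR (joinGraph l.graph r.graph l.coloring r.coloring ∅)
        (Sum.elim l.coloring r.coloring) R

def vEquiv : (s : NT k) → s.V ≃ Fin s.size
  | leaf _ => Equiv.ofUnique Unit (Fin 1)
  | node _ _ l r => (l.vEquiv.sumCongr r.vEquiv).trans finSumFinEquiv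

lemma size_pos (s : NT k) : 1 ≤ s.size := by
  induction s with
  | leaf c => exact le_refl 1
  | node R f l r ihl ihr => simp only [size]; omega

def enc : NT k → List (NData k)
  | leaf c => [Sum.inl c]
  | node R f l r => Sum.inr (R, f) :: (enc l ++ enc r)

lemma length_enc (s : NT k) : (enc s).length = 2 * s.size - 1 := by
  induction s with
  | leaf c => rfl
  | node R f l r ihl ihr =>
      have hl := size_pos l
      have hr := size_pos r
      simp only [enc, size, List.length_cons, List.length_append]
      omega

lemma enc_prefix : ∀ (s₁ s₂ : NT k) (L₁ L₂ : List (NData k)),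
    enc s₁ ++ L₁ = enc s₂ ++ L₂ → s₁ = s₂ ∧ L₁ = L₂ := by
  intro s₁
  induction s₁ with
  | leaf c =>
      rintro (⟨c'⟩ | ⟨R', f', l', r'⟩) L₁ L₂ h
      · simp only [enc, List.cons_append, List.nil_append, List.cons.injEq,
          Sum.inl.injEq] at h
        exact ⟨by rw [h.1], h.2⟩
      · simp only [enc, List.cons_append, List.cons.injEq] at h
        exact absurd h.1 (by simp)
  | node R f l r ihl ihr =>
      rintro (⟨c'⟩ | ⟨R', f', l', r'⟩) L₁ L₂ h
      · simp only [enc, List.cons_append, List.cons.injEq] at h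
        exact absurd h.1 (by simp)
      · simp only [enc, List.cons_append, List.cons.injEq, Sum.inr.injEq,
          Prod.mk.injEq] at h
        obtain ⟨⟨hR, hf⟩, h2⟩ := h
        rw [List.append_assoc, List.append_assoc] at h2
        obtain ⟨hll, h3⟩ := ihl l' (enc r ++ L₁) (enc r' ++ L₂) h2
        obtain ⟨hrr, h4⟩ := ihr r' L₁ L₂ h3
        subst hR; subst hf; subst hll; subst hrr
        exact ⟨rfl, h4⟩

lemma enc_injective : Function.Injective (enc : NT k → List (NData k)) := by
  intro s₁ s₂ h
  exact (enc_prefix s₁ s₂ [] [] (by simpa using h)).1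

end NT

section AdjLemmas

variable {k : ℕ}

lemma joinGraph_inl_inl {α β : Type*} (G₁ : SimpleGraph α) (G₂ : SimpleGraph β)
    (c₁ : α → Fin k) (c₂ : β → Fin k) (S : Set (Fin k × Fin k)) (a b : α) :
    (joinGraph G₁ G₂ c₁ c₂ S).Adj (Sum.inl a) (Sum.inl b) ↔ G₁.Adj a b := Iff.rfl

lemma joinGraph_inr_inr {α β : Type*} (G₁ : SimpleGraph α) (G₂ : SimpleGraph β)
    (c₁ : α → Fin k) (c₂ : β → Fin k) (S : Set (Fin k × Fin k)) (a b : β) :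
    (joinGraph G₁ G₂ c₁ c₂ S).Adj (Sum.inr a) (Sum.inr b) ↔ G₂.Adj a b := Iff.rfl

lemma joinGraph_inl_inr {α β : Type*} (G₁ : SimpleGraph α) (G₂ : SimpleGraph β)
    (c₁ : α → Fin k) (c₂ : β → Fin k) (S : Set (Fin k × Fin k)) (a : α) (b : β) :
    (joinGraph G₁ G₂ c₁ c₂ S).Adj (Sum.inl a) (Sum.inr b) ↔ (c₁ a, c₂ b) ∈ S := Iff.rfl

lemma joinGraph_inr_inl {α β : Type*} (G₁ : SimpleGraph α) (G₂ : SimpleGraph β)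
    (c₁ : α → Fin k) (c₂ : β → Fin k) (S : Set (Fin k × Fin k)) (a : α) (b : β) :
    (joinGraph G₁ G₂ c₁ c₂ S).Adj (Sum.inr b) (Sum.inl a) ↔ (c₁ a, c₂ b) ∈ S := Iff.rfl

lemma addColorEdges_adj {α : Type*} (G : SimpleGraph α) (c : α → Fin k) (i j : Fin k)
    (u v : α) : (addColorEdges G c i j).Adj u v ↔
      (G.Adj u v ∨ (u ≠ v ∧ ((c u = i ∧ c v = j) ∨ (c u = j ∧ c v = i)))) := Iff.rfl

namespace NT

lemma graph_leaf (c : Fin k) : (NT.leaf c).graph = (⊥ : SimpleGraph (NT.leaf c).V) := rfl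

lemma coloring_leaf (c : Fin k) (v : (NT.leaf c).V) : (NT.leaf c).coloring v = c := rfl

lemma coloring_node (R : Finset (Fin k × Fin k)) (f : Fin k → Fin k) (l r : NT k)
    (v : (NT.node R f l r).V) :
    (NT.node R f l r).coloring v = f (Sum.elim l.coloring r.coloring v) := rfl

lemma graph_node_adj (R : Finset (Fin k × Fin k)) (f : Fin k → Fin k) (l r : NT k)
    (u v : (NT.node R f l r).V) :
    (NT.node R f l r).graph.Adj u v ↔
      ((joinGraph l.graph r.graph l.coloring r.coloring ∅).Adj u v ∨
        (u ≠ v ∧ ((Sum.elim l.coloring r.coloring u, Sum.elim l.coloring r.coloring v) ∈ R ∨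
          (Sum.elim l.coloring r.coloring v, Sum.elim l.coloring r.coloring u) ∈ R))) := Iff.rfl

end NT

namespace CWExpr

lemma graph_single (c : Fin k) : (single c).graph = (⊥ : SimpleGraph (single c).V) := rfl

lemma graph_union (t₁ t₂ : CWExpr k) :
    (union t₁ t₂).graph = joinGraph t₁.graph t₂.graph t₁.coloring t₂.coloring ∅ := rfl

lemma graph_addEdges_adj (i j : Fin k) (hij : i ≠ j) (t : CWExpr k)
    (u v : (addEdges i j hij t).V) :
    (addEdges i j hij t).graph.Adj u v ↔
      (t.graph.Adj u v ∨ (u ≠ v ∧ ((t.coloring u = i ∧ t.coloring v = j) ∨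
        (t.coloring u = j ∧ t.coloring v = i)))) := Iff.rfl

end CWExpr

end AdjLemmas

lemma cwlogic {P Q1 Q2 N C1 C2 C3 C4 : Prop} :
    (P ∨ (N ∧ ((Q1 ∨ (C1 ∧ C2)) ∨ (Q2 ∨ (C3 ∧ C4))))) ↔
      ((P ∨ (N ∧ (Q1 ∨ Q2))) ∨ (N ∧ ((C1 ∧ C2) ∨ (C4 ∧ C3)))) := by
  tauto

open CWExpr in
lemma exists_nt {k' k : ℕ} (h : k' ≤ k) (t : CWExpr k') :
    ∃ (s : NT k) (e : t.V ≃ s.V),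
      (∀ v, s.coloring (e v) = Fin.castLE h (t.coloring v)) ∧
      (∀ u v, s.graph.Adj (e u) (e v) ↔ t.graph.Adj u v) := by
  classical
  induction t with
  | single c =>
      refine ⟨NT.leaf (Fin.castLE h c), Equiv.refl _, fun v => rfl, ?_⟩
      intro u v
      rw [NT.graph_leaf, CWExpr.graph_single]
  | union t₁ t₂ ih₁ ih₂ =>
      obtain ⟨s₁, e₁, hc₁, hg₁⟩ := ih₁
      obtain ⟨s₂, e₂, hc₂, hg₂⟩ := ih₂
      refine ⟨NT.node ∅ id s₁ s₂, Equiv.sumCongr e₁ e₂, ?_, ?_⟩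
      · rintro (v | v)
        · show (NT.node ∅ id s₁ s₂).coloring (Sum.inl (e₁ v))
              = Fin.castLE h ((t₁.union t₂).coloring (Sum.inl v))
          rw [NT.coloring_node]
          simpa [CWExpr.coloring] using hc₁ v
        · show (NT.node ∅ id s₁ s₂).coloring (Sum.inr (e₂ v))
              = Fin.castLE h ((t₁.union t₂).coloring (Sum.inr v))
          rw [NT.coloring_node]
          simpa [CWExpr.coloring] using hc₂ v
      · rintro (u | u) (v | v)
        · show (NT.node ∅ id s₁ s₂).graph.Adj (Sum.inl (e₁ u)) (Sum.inl (e₁ v))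
              ↔ (t₁.union t₂).graph.Adj (Sum.inl u) (Sum.inl v)
          rw [NT.graph_node_adj, CWExpr.graph_union, joinGraph_inl_inl, joinGraph_inl_inl]
          simp [hg₁ u v]
        · show (NT.node ∅ id s₁ s₂).graph.Adj (Sum.inl (e₁ u)) (Sum.inr (e₂ v))
              ↔ (t₁.union t₂).graph.Adj (Sum.inl u) (Sum.inr v)
          rw [NT.graph_node_adj, CWExpr.graph_union, joinGraph_inl_inr, joinGraph_inl_inr]
          simp
        · show (NT.node ∅ id s₁ s₂).graph.Adj (Sum.inr (e₂ u)) (Sum.inl (e₁ v))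
              ↔ (t₁.union t₂).graph.Adj (Sum.inr u) (Sum.inl v)
          rw [NT.graph_node_adj, CWExpr.graph_union, joinGraph_inr_inl, joinGraph_inr_inl]
          simp
        · show (NT.node ∅ id s₁ s₂).graph.Adj (Sum.inr (e₂ u)) (Sum.inr (e₂ v))
              ↔ (t₁.union t₂).graph.Adj (Sum.inr u) (Sum.inr v)
          rw [NT.graph_node_adj, CWExpr.graph_union, joinGraph_inr_inr, joinGraph_inr_inr]
          simp [hg₂ u v]
  | addEdges i j hij t ih =>
      obtain ⟨s, e, hc, hg⟩ := ih
      cases s with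
      | leaf c =>
          refine ⟨NT.leaf c, e, hc, ?_⟩
          intro u v
          have huv : u = v := e.injective rfl
          subst huv
          rw [NT.graph_leaf, CWExpr.graph_addEdges_adj]
          simp
      | node R f l r =>
          set F : Finset (Fin k × Fin k) := Finset.univ.filter
              (fun p : Fin k × Fin k => f p.1 = Fin.castLE h i ∧ f p.2 = Fin.castLE h j)
              with hFdef
          have hF : ∀ a c : Fin k,
              ((a, c) ∈ F) = (f a = Fin.castLE h i ∧ f c = Fin.castLE h j) := by
            intro a c
            simp [hFdef]
          refine ⟨NT.node (R ∪ F) f l r, e, hc, ?_⟩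
          intro u v
          show (NT.node (R ∪ F) f l r).graph.Adj (e u) (e v) ↔
            (CWExpr.addEdges i j hij t).graph.Adj u v
          have hguv : ((joinGraph l.graph r.graph l.coloring r.coloring ∅).Adj (e u) (e v) ∨
              (e u ≠ e v ∧
                ((Sum.elim l.coloring r.coloring (e u), Sum.elim l.coloring r.coloring (e v)) ∈ R ∨
                 (Sum.elim l.coloring r.coloring (e v), Sum.elim l.coloring r.coloring (e u)) ∈ R)))
              ↔ t.graph.Adj u v := hg u v
          have hcu : f (Sum.elim l.coloring r.coloring (e u)) = Fin.castLE h (t.coloring u) := hc u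
          have hcv : f (Sum.elim l.coloring r.coloring (e v)) = Fin.castLE h (t.coloring v) := hc v
          have hne : (e u ≠ e v) ↔ (u ≠ v) := by simp
          have hne2 : (@Ne ((NT.node (R ∪ F) f l r).V) (e u) (e v)) ↔ (u ≠ v) := hne
          rw [hne] at hguv
          rw [NT.graph_node_adj, CWExpr.graph_addEdges_adj, Finset.mem_union, Finset.mem_union,
            hF, hF, hne2, ← hguv]
          simp only [hcu, hcv, ne_eq, Equiv.apply_eq_iff_eq, EmbeddingLike.apply_eq_iff_eq, Fin.castLE_inj]
          exact cwlogic
  | recolor i j t ih =>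
      obtain ⟨s, e, hc, hg⟩ := ih
      cases s with
      | leaf c =>
          refine ⟨NT.leaf (if c = Fin.castLE h i then Fin.castLE h j else c), e, ?_, hg⟩
          intro v
          have hcv : c = Fin.castLE h (t.coloring v) := hc v
          show (if c = Fin.castLE h i then Fin.castLE h j else c)
              = Fin.castLE h (if t.coloring v = i then j else t.coloring v)
          rw [hcv]
          by_cases hvi : t.coloring v = i
          · simp [hvi]
          · rw [if_neg (by simpa [Fin.castLE_inj] using hvi), if_neg hvi]
      | node R f l r =>
          refine ⟨NT.node R (fun a => if f a = Fin.castLE h i then Fin.castLE h j else f a)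
            l r, e, ?_, hg⟩
          intro v
          have hcv : f (Sum.elim l.coloring r.coloring (e v)) = Fin.castLE h (t.coloring v) := hc v
          show (if f (Sum.elim l.coloring r.coloring (e v)) = Fin.castLE h i
              then Fin.castLE h j else f (Sum.elim l.coloring r.coloring (e v)))
              = Fin.castLE h (if t.coloring v = i then j else t.coloring v)
          rw [hcv]
          by_cases hvi : t.coloring v = i
          · simp [hvi]
          · rw [if_neg (by simpa [Fin.castLE_inj] using hvi), if_neg hvi]


lemma cwlogic2 {T N EL C : Prop} :
    ((T ∨ (N ∧ EL)) ∨ (N ∧ C)) ↔ (T ∨ (N ∧ (C ∨ EL))) := by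
  tauto

open CWExpr in
lemma fold_spec {k : ℕ} (L : List {p : Fin k × Fin k // p.1 ≠ p.2}) (t : CWExpr k) :
    ∃ (t' : CWExpr k) (e : t.V ≃ t'.V),
      (∀ v, t'.coloring (e v) = t.coloring v) ∧
      (∀ u v, t'.graph.Adj (e u) (e v) ↔ (t.graph.Adj u v ∨ (u ≠ v ∧ ∃ p ∈ L,
        (t.coloring u = p.1.1 ∧ t.coloring v = p.1.2) ∨
        (t.coloring u = p.1.2 ∧ t.coloring v = p.1.1)))) := by
  induction L with
  | nil => exact ⟨t, Equiv.refl _, fun v => rfl, by simp⟩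
  | cons p L ih =>
      obtain ⟨t₁, e₁, hc₁, hg₁⟩ := ih
      refine ⟨CWExpr.addEdges p.1.1 p.1.2 p.2 t₁, e₁, hc₁, ?_⟩
      intro u v
      show (CWExpr.addEdges p.1.1 p.1.2 p.2 t₁).graph.Adj (e₁ u) (e₁ v) ↔ _
      have hne2 : (@Ne ((CWExpr.addEdges p.1.1 p.1.2 p.2 t₁).V) (e₁ u) (e₁ v)) ↔ (u ≠ v) :=
        not_congr ⟨fun h => e₁.injective h, fun h => by rw [h]⟩
      have hmem : (∃ q ∈ (p :: L), ((t.coloring u = q.1.1 ∧ t.coloring v = q.1.2) ∨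
          (t.coloring u = q.1.2 ∧ t.coloring v = q.1.1))) ↔
          (((t.coloring u = p.1.1 ∧ t.coloring v = p.1.2) ∨
            (t.coloring u = p.1.2 ∧ t.coloring v = p.1.1)) ∨
           (∃ q ∈ L, ((t.coloring u = q.1.1 ∧ t.coloring v = q.1.2) ∨
            (t.coloring u = q.1.2 ∧ t.coloring v = q.1.1)))) :=
        List.exists_mem_cons_iff _ p L
      rw [CWExpr.graph_addEdges_adj, hne2, hg₁ u v, hc₁ u, hc₁ v, hmem]
      exact cwlogic2

open CWExpr in
lemma exists_expr {k : ℕ} : ∀ (n : ℕ), 1 ≤ n → ∀ (hk : n ≤ k) (G : SimpleGraph (Fin n)),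
    ∃ (t : CWExpr k) (e : Fin n ≃ t.V),
      (∀ v, t.coloring (e v) = Fin.castLE hk v) ∧
      (∀ u v, t.graph.Adj (e u) (e v) ↔ G.Adj u v) := by
  intro n
  induction n with
  | zero => intro h; exact absurd h (by omega)
  | succ m ih =>
      intro _ hk G
      classical
      rcases Nat.eq_zero_or_pos m with hm | hm
      · subst hm
        refine ⟨CWExpr.single (Fin.castLE hk 0),
          ⟨fun _ => (), fun _ => 0, fun x => Fin.ext (by have := x.isLt; omega),
            fun x => rfl⟩, ?_, ?_⟩
        · intro v
          have hv : v = 0 := Fin.ext (by have := v.isLt; omega)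
          subst hv
          rfl
        · intro u v
          have huv : u = v := Fin.ext (by have := u.isLt; have := v.isLt; omega)
          subst huv
          rw [CWExpr.graph_single]
          simp
      · have hm_le : m ≤ k := le_trans (Nat.le_succ m) hk
        obtain ⟨t₀, e₀, hc₀, hg₀⟩ :=
          ih hm hm_le (SimpleGraph.comap (Fin.castSucc : Fin m → Fin (m + 1)) G)
        have hip : ∀ i : Fin m,
            Fin.castLE hk (Fin.castSucc i) ≠ Fin.castLE hk (Fin.last m) := by
          intro i heq
          have h1 := congrArg Fin.val heq
          simp only [Fin.coe_castLE, Fin.coe_castSucc, Fin.val_last] at h1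
          omega
        obtain ⟨eB, heBcast, heBlast⟩ :
            ∃ eB : Fin (m + 1) ≃ (CWExpr.union t₀ (CWExpr.single (Fin.castLE hk (Fin.last m)))).V,
              (∀ i : Fin m, eB (Fin.castSucc i) = Sum.inl (e₀ i)) ∧
              (eB (Fin.last m) = Sum.inr ()) := by
          refine ⟨finSuccEquivLast.trans ((Equiv.optionEquivSumPUnit (Fin m)).trans
            (Equiv.sumCongr e₀ (Equiv.refl Unit))), ?_, ?_⟩
          · intro i
            simp only [Equiv.trans_apply, finSuccEquivLast_castSucc,
              Equiv.optionEquivSumPUnit_some]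
            exact rfl
          · simp only [Equiv.trans_apply, finSuccEquivLast_last,
              Equiv.optionEquivSumPUnit_none]
            exact rfl
        have hbc : ∀ v : Fin (m + 1), (CWExpr.union t₀ (CWExpr.single (Fin.castLE hk (Fin.last m)))).coloring (eB v) = Fin.castLE hk v := by
          intro v
          induction v using Fin.lastCases with
          | last => rw [heBlast]; rfl
          | cast i =>
              rw [heBcast i]
              calc (CWExpr.union t₀ (CWExpr.single (Fin.castLE hk (Fin.last m)))).coloring (Sum.inl (e₀ i)) = t₀.coloring (e₀ i) := rfl
                _ = Fin.castLE hm_le i := hc₀ i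
                _ = Fin.castLE hk (Fin.castSucc i) := by apply Fin.ext; simp
        obtain ⟨t₁, e₁, hc₁, hg₁⟩ := fold_spec (((Finset.univ.filter (fun i : Fin m => G.Adj (Fin.castSucc i) (Fin.last m))).toList).map (fun i => (⟨(Fin.castLE hk (Fin.castSucc i), Fin.castLE hk (Fin.last m)), hip i⟩ : {p : Fin k × Fin k // p.1 ≠ p.2}))) (CWExpr.union t₀ (CWExpr.single (Fin.castLE hk (Fin.last m))))
        refine ⟨t₁, eB.trans e₁, ?_, ?_⟩
        · intro v
          simp only [Equiv.trans_apply]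
          rw [hc₁ (eB v), hbc v]
        · intro u v
          simp only [Equiv.trans_apply]
          rw [hg₁ (eB u) (eB v)]
          have hnee : (eB u ≠ eB v) ↔ (u ≠ v) := by simp
          have hcond : (∃ p : {p : Fin k × Fin k // p.1 ≠ p.2}, p ∈ (((Finset.univ.filter (fun i : Fin m => G.Adj (Fin.castSucc i) (Fin.last m))).toList).map (fun i => (⟨(Fin.castLE hk (Fin.castSucc i), Fin.castLE hk (Fin.last m)), hip i⟩ : {p : Fin k × Fin k // p.1 ≠ p.2}))) ∧ (
              ((CWExpr.union t₀ (CWExpr.single (Fin.castLE hk (Fin.last m)))).coloring (eB u) = p.1.1 ∧ (CWExpr.union t₀ (CWExpr.single (Fin.castLE hk (Fin.last m)))).coloring (eB v) = p.1.2) ∨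
              ((CWExpr.union t₀ (CWExpr.single (Fin.castLE hk (Fin.last m)))).coloring (eB u) = p.1.2 ∧ (CWExpr.union t₀ (CWExpr.single (Fin.castLE hk (Fin.last m)))).coloring (eB v) = p.1.1))) ↔
              (∃ i : Fin m, G.Adj (Fin.castSucc i) (Fin.last m) ∧
                ((u = Fin.castSucc i ∧ v = Fin.last m) ∨
                 (u = Fin.last m ∧ v = Fin.castSucc i))) := by
            simp only [List.mem_map, Finset.mem_toList, Finset.mem_filter, Finset.mem_univ,
              true_and, hbc u, hbc v]
            constructor
            · rintro ⟨q, ⟨i, hi, rfl⟩, hcc⟩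
              refine ⟨i, hi, ?_⟩
              simpa only [Fin.castLE_inj] using hcc
            · rintro ⟨i, hi, hcc⟩
              refine ⟨⟨(Fin.castLE hk (Fin.castSucc i), Fin.castLE hk (Fin.last m)), hip i⟩,
                ⟨i, hi, rfl⟩, ?_⟩
              simpa only [Fin.castLE_inj] using hcc
          rw [hnee, hcond]
          induction u using Fin.lastCases with
          | last =>
              induction v using Fin.lastCases with
              | last =>
                  rw [heBlast]
                  constructor
                  · rintro (h | ⟨hne, _⟩)
                    · rw [CWExpr.graph_union, joinGraph_inr_inr, CWExpr.graph_single] at h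
                      simp at h
                    · exact absurd rfl hne
                  · intro h
                    exact absurd h (G.irrefl)
              | cast b =>
                  rw [heBlast, heBcast b, CWExpr.graph_union, joinGraph_inr_inl]
                  constructor
                  · rintro (h | ⟨hne, i, hi, (⟨h1, h2⟩ | ⟨h1, h2⟩)⟩)
                    · exact absurd h (Set.notMem_empty _)
                    · exact absurd h1.symm (Fin.castSucc_lt_last i).ne
                    · rw [Fin.castSucc_injective _ h2]
                      exact hi.symm
                  · intro h
                    exact Or.inr ⟨(Fin.castSucc_lt_last b).ne', b, h.symm, Or.inr ⟨rfl, rfl⟩⟩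
          | cast a =>
              induction v using Fin.lastCases with
              | last =>
                  rw [heBcast a, heBlast, CWExpr.graph_union, joinGraph_inl_inr]
                  constructor
                  · rintro (h | ⟨hne, i, hi, (⟨h1, h2⟩ | ⟨h1, h2⟩)⟩)
                    · exact absurd h (Set.notMem_empty _)
                    · rw [Fin.castSucc_injective _ h1]
                      exact hi
                    · exact absurd h1 (Fin.castSucc_lt_last a).ne
                  · intro h
                    exact Or.inr ⟨(Fin.castSucc_lt_last a).ne, a, h, Or.inl ⟨rfl, rfl⟩⟩
              | cast b =>
                  rw [heBcast a, heBcast b, CWExpr.graph_union, joinGraph_inl_inl,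
                    hg₀ a b]
                  constructor
                  · rintro (h | ⟨hne, i, hi, (⟨h1, h2⟩ | ⟨h1, h2⟩)⟩)
                    · exact h
                    · exact absurd h2 (Fin.castSucc_lt_last b).ne
                    · exact absurd h1 (Fin.castSucc_lt_last a).ne
                  · intro h
                    exact Or.inl h

lemma NT.adj_transfer {k : ℕ} {s s' : NT k} (hss : s = s') (a b : s.V) (a' b' : s'.V)
    (ha : ((s.vEquiv a : Fin s.size) : ℕ) = ((s'.vEquiv a' : Fin s'.size) : ℕ))
    (hb : ((s.vEquiv b : Fin s.size) : ℕ) = ((s'.vEquiv b' : Fin s'.size) : ℕ)) :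
    (s.graph.Adj a b ↔ s'.graph.Adj a' b') := by
  subst hss
  have ha' : a = a' := s.vEquiv.injective (Fin.ext ha)
  have hb' : b = b' := s.vEquiv.injective (Fin.ext hb)
  rw [ha', hb']

lemma key_lemma {n k : ℕ} (hn : 1 ≤ n) (G : SimpleGraph (Fin n)) (hcw : cliqueWidth G ≤ k) :
    ∃ (s : NT k) (e : Fin n ≃ s.V), s.size = n ∧
      ∀ u v, G.Adj u v ↔ s.graph.Adj (e u) (e v) := by
  have hne : HasCliqueWidthLE G n := by
    obtain ⟨t, e, hc, hg⟩ := exists_expr (k := n) n hn (le_refl n) G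
    exact ⟨t, ⟨⟨e, fun {u v} => hg u v⟩⟩⟩
  have hnonempty : {k0 : ℕ | HasCliqueWidthLE G k0}.Nonempty := ⟨n, by exact hne⟩
  have hmem : HasCliqueWidthLE G (cliqueWidth G) := Nat.sInf_mem hnonempty
  obtain ⟨t, ⟨iso⟩⟩ := hmem
  obtain ⟨s, e', hc', hg'⟩ := exists_nt hcw t
  have hmap : ∀ u v : Fin n, t.graph.Adj (iso.toEquiv u) (iso.toEquiv v) ↔ G.Adj u v :=
    fun u v => iso.map_adj_iff
  refine ⟨s, iso.toEquiv.trans e', ?_, ?_⟩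
  · have hq : Nonempty (Fin s.size ≃ Fin n) :=
      ⟨(((iso.toEquiv.trans e').trans s.vEquiv)).symm⟩
    exact Fin.equiv_iff_eq.mp hq
  · intro u v
    simp only [Equiv.trans_apply]
    rw [← hmap u v, hg']

set_option maxHeartbeats 1000000 in
set_option synthInstance.maxHeartbeats 400000 in
/-- For every `k ≥ 1` there is a constant `C = C(k)` such that for every `n ≥ 2` the
number of simple graphs on the labeled vertex set `{1,…,n}` of clique-width at most `k`
is at most `n^(C·n)` (equivalently, `2^(C·n·log₂ n)`). -/
theorem count_bounded_cliqueWidth_graphs :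
    ∀ k : ℕ, 1 ≤ k → ∃ C : ℕ, 0 < C ∧
      ∀ n : ℕ, 2 ≤ n →
        ({G : SimpleGraph (Fin n) | cliqueWidth G ≤ k}).ncard ≤ n ^ (C * n) := by
  intro k hk
  classical
  set A := Fintype.card (NData k) + 1 with hA
  have hA1 : 1 ≤ A := by omega
  refine ⟨2 * A + 1, by omega, ?_⟩
  intro n hn
  have hS : {G : SimpleGraph (Fin n) | cliqueWidth G ≤ k}.ncard ≤
      Nat.card ((Fin (2 * n - 1) → Option (NData k)) × (Fin n → Fin n)) := by
    rw [← Nat.card_coe_set_eq]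
    have hchoice : ∀ x : {G : SimpleGraph (Fin n) | cliqueWidth G ≤ k},
        ∃ (s : NT k) (e : Fin n ≃ s.V), s.size = n ∧
          ∀ u v, (x : SimpleGraph (Fin n)).Adj u v ↔ s.graph.Adj (e u) (e v) :=
      fun x => key_lemma (by omega) x.1 x.2
    choose s e hsz hadj using hchoice
    apply Nat.card_le_card_of_injective
      (f := fun x => ((fun i : Fin (2 * n - 1) => ((s x).enc)[i.val]?),
        fun u : Fin n => Fin.cast (hsz x) ((s x).vEquiv ((e x) u))))
    intro x y hxy
    have h1 := congrArg Prod.fst hxy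
    have h2 := congrArg Prod.snd hxy
    simp only at h1 h2
    have hlist : (s x).enc = (s y).enc := by
      apply List.ext_getElem?
      intro i
      by_cases hi : i < 2 * n - 1
      · exact congrFun h1 ⟨i, hi⟩
      · rw [List.getElem?_eq_none_iff.mpr, List.getElem?_eq_none_iff.mpr]
        · rw [NT.length_enc, hsz y]; omega
        · rw [NT.length_enc, hsz x]; omega
    have hss : s x = s y := NT.enc_injective hlist
    have hval : ∀ u : Fin n,
        (((s x).vEquiv ((e x) u) : Fin (s x).size) : ℕ) =
        (((s y).vEquiv ((e y) u) : Fin (s y).size) : ℕ) := by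
      intro u
      have h3 := congrArg Fin.val (congrFun h2 u)
      simpa using h3
    apply Subtype.ext
    ext u v
    rw [hadj x u v, hadj y u v]
    exact NT.adj_transfer hss _ _ _ _ (hval u) (hval v)
  have hcardT : Nat.card ((Fin (2 * n - 1) → Option (NData k)) × (Fin n → Fin n)) =
      A ^ (2 * n - 1) * n ^ n := by
    rw [Nat.card_eq_fintype_card]
    simp [Fintype.card_fun, Fintype.card_option, Fintype.card_fin, hA]
  calc ({G : SimpleGraph (Fin n) | cliqueWidth G ≤ k}).ncard
      ≤ Nat.card ((Fin (2 * n - 1) → Option (NData k)) × (Fin n → Fin n)) := hS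
    _ = A ^ (2 * n - 1) * n ^ n := hcardT
    _ ≤ n ^ (2 * A * n) * n ^ n := by
        have h1 : A ^ (2 * n - 1) ≤ A ^ (2 * n) := Nat.pow_le_pow_right hA1 (by omega)
        have h2 : A ≤ n ^ A := le_trans (Nat.lt_two_pow_self (n := A)).le (Nat.pow_le_pow_left hn A)
        have h3 : A ^ (2 * n) ≤ (n ^ A) ^ (2 * n) := Nat.pow_le_pow_left h2 _
        have h4 : (n ^ A) ^ (2 * n) = n ^ (2 * A * n) := by
          rw [← pow_mul]
          congr 1
          ring
        exact Nat.mul_le_mul (le_trans h1 (le_trans h3 (le_of_eq h4))) (le_refl _)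
    _ = n ^ (2 * A * n + n) := by rw [← pow_add]
    _ = n ^ ((2 * A + 1) * n) := by
        congr 1
        ring
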